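/- Let X be a Polish space, μ a Borel probability measure on X, and ν a Borel probability measure on P(X) such that μ is the barycenter of ν, i.e. for every bounded continuous φ : X → ℝ, ∫_X φ dμ = ∫_{P(X)} (∫_X φ ds) dν(s). Then for every bounded Borel measurable function q : X → ℝ the barycentrical formula extends: ∫_X q dμ = ∫_{P(X)} (∫_X q ds) dν(s). In particular, the map μ ↦ ∫_X q dμ is measure affine. -/

import Mathlib

open MeasureTheory Filter Topology BoundedContinuousFunction
open scoped ENNReal NNReal

section aux

variable {X : Type*} [TopologicalSpace X] [PolishSpace X] [MeasurableSpace X] [BorelSpace X]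
  [MeasurableSpace (ProbabilityMeasure X)] [BorelSpace (ProbabilityMeasure X)]

lemma aux_cont_lintegral (f : X →ᵇ ℝ≥0) :
    Continuous (fun s : ProbabilityMeasure X => ∫⁻ x, (f x : ℝ≥0∞) ∂(s : Measure X)) := by
  have : (fun s : ProbabilityMeasure X => ∫⁻ x, (f x : ℝ≥0∞) ∂(s : Measure X))
      = fun s : ProbabilityMeasure X => ((s.toFiniteMeasure.testAgainstNN f : ℝ≥0) : ℝ≥0∞) := by
    funext s
    rw [FiniteMeasure.testAgainstNN_coe_eq]
    rfl
  rw [this]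
  exact ENNReal.continuous_coe.comp (ProbabilityMeasure.continuous_testAgainstNN_eval f)

lemma aux_meas_closed {F : Set X} (hF : IsClosed F) :
    Measurable (fun s : ProbabilityMeasure X => (s : Measure X) F) := by
  apply measurable_of_tendsto_metrizable
    (f := fun n (s : ProbabilityMeasure X) => ∫⁻ x, (hF.apprSeq n x : ℝ≥0∞) ∂(s : Measure X))
  · exact fun n => (aux_cont_lintegral (hF.apprSeq n)).measurable
  · rw [tendsto_pi_nhds]
    intro s
    exact HasOuterApproxClosed.tendsto_lintegral_apprSeq hF (s : Measure X)

lemma aux_meas_coe :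
    Measurable (fun s : ProbabilityMeasure X => (s : Measure X)) := by
  apply Measure.measurable_of_measurable_coe
  have key : ∀ ⦃A : Set X⦄, MeasurableSet A →
      Measurable (fun s : ProbabilityMeasure X => (s : Measure X) A) := by
    have h_eq : (inferInstance : MeasurableSpace X)
        = MeasurableSpace.generateFrom {s : Set X | IsClosed s} :=
      BorelSpace.measurable_eq.trans borel_eq_generateFrom_isClosed
    refine MeasurableSpace.induction_on_inter
      (C := fun A _ => Measurable fun s : ProbabilityMeasure X => (s : Measure X) A)
      h_eq isPiSystem_isClosed ?_ ?_ ?_ ?_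
    · simp only [measure_empty]
      exact measurable_const
    · exact fun F hF => aux_meas_closed hF
    · intro A hA hmeas
      have : (fun s : ProbabilityMeasure X => (s : Measure X) Aᶜ)
          = fun s : ProbabilityMeasure X => 1 - (s : Measure X) A := by
        funext s
        rw [measure_compl hA (measure_ne_top _ _), measure_univ]
      rw [this]
      exact Measurable.const_sub hmeas 1
    · intro g hdisj hgm hmeas
      have : (fun s : ProbabilityMeasure X => (s : Measure X) (⋃ i, g i))
          = fun s : ProbabilityMeasure X => ∑' i, (s : Measure X) (g i) := by
        funext s
        exact measure_iUnion hdisj hgm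
      rw [this]
      exact Measurable.ennreal_tsum hmeas
  exact fun A hA => key hA

/-- Bochner integral version of `lintegral_bind` for bounded measurable real functions. -/
lemma aux_integral_bind {α β : Type*} [MeasurableSpace α] [MeasurableSpace β]
    (ν : Measure α) [IsProbabilityMeasure ν] (g : α → Measure β) (hg : Measurable g)
    (hprob : ∀ a, IsProbabilityMeasure (g a))
    (q : β → ℝ) (hqm : Measurable q) {C : ℝ} (hC : ∀ x, |q x| ≤ C) (hCnn : 0 ≤ C) :
    ∫ x, q x ∂(ν.bind g) = ∫ a, ∫ x, q x ∂(g a) ∂ν := by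
  haveI hbp : IsProbabilityMeasure (ν.bind g) := by
    constructor
    rw [Measure.bind_apply MeasurableSet.univ hg.aemeasurable]
    simp [measure_univ]
  -- integrability of q against any probability measure
  have hint : ∀ m : Measure β, IsProbabilityMeasure m → Integrable q m := by
    intro m hm
    refine ⟨hqm.aestronglyMeasurable, ?_⟩
    exact HasFiniteIntegral.of_bounded (C := C)
      (ae_of_all _ fun x => by rw [Real.norm_eq_abs]; exact hC x)
  -- positive and negative parts
  set P : Measure β → ℝ≥0∞ := fun m => ∫⁻ x, ENNReal.ofReal (q x) ∂m with hP
  set N : Measure β → ℝ≥0∞ := fun m => ∫⁻ x, ENNReal.ofReal (-q x) ∂m with hN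
  have hPm : Measurable (fun m : Measure β => P m) :=
    Measure.measurable_lintegral hqm.ennreal_ofReal
  have hNm : Measurable (fun m : Measure β => N m) :=
    Measure.measurable_lintegral hqm.neg.ennreal_ofReal
  have hPle : ∀ m : Measure β, IsProbabilityMeasure m → P m ≤ ENNReal.ofReal C := by
    intro m hm
    calc P m ≤ ∫⁻ _, ENNReal.ofReal C ∂m := by
          apply lintegral_mono
          intro x
          exact ENNReal.ofReal_le_ofReal ((le_abs_self _).trans (hC x))
      _ = ENNReal.ofReal C := by simp [measure_univ]
  have hNle : ∀ m : Measure β, IsProbabilityMeasure m → N m ≤ ENNReal.ofReal C := by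
    intro m hm
    calc N m ≤ ∫⁻ _, ENNReal.ofReal C ∂m := by
          apply lintegral_mono
          intro x
          exact ENNReal.ofReal_le_ofReal ((neg_le_abs _).trans (hC x))
      _ = ENNReal.ofReal C := by simp [measure_univ]
  have hrepr : ∀ m : Measure β, IsProbabilityMeasure m →
      ∫ x, q x ∂m = (P m).toReal - (N m).toReal := fun m hm =>
    integral_eq_lintegral_pos_part_sub_lintegral_neg_part (hint m hm)
  -- LHS
  have hPbind : P (ν.bind g) = ∫⁻ a, P (g a) ∂ν :=
    Measure.lintegral_bind hg.aemeasurable hqm.ennreal_ofReal.aemeasurable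
  have hNbind : N (ν.bind g) = ∫⁻ a, N (g a) ∂ν :=
    Measure.lintegral_bind hg.aemeasurable hqm.neg.ennreal_ofReal.aemeasurable
  rw [hrepr _ hbp, hPbind, hNbind]
  -- RHS
  have hintP : Integrable (fun a => (P (g a)).toReal) ν := by
    refine ⟨((hPm.comp hg).ennreal_toReal).aestronglyMeasurable, ?_⟩
    refine HasFiniteIntegral.of_bounded (C := C) (ae_of_all _ fun a => ?_)
    rw [Real.norm_eq_abs, abs_of_nonneg ENNReal.toReal_nonneg]
    exact ENNReal.toReal_le_of_le_ofReal hCnn (hPle _ (hprob a))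
  have hintN : Integrable (fun a => (N (g a)).toReal) ν := by
    refine ⟨((hNm.comp hg).ennreal_toReal).aestronglyMeasurable, ?_⟩
    refine HasFiniteIntegral.of_bounded (C := C) (ae_of_all _ fun a => ?_)
    rw [Real.norm_eq_abs, abs_of_nonneg ENNReal.toReal_nonneg]
    exact ENNReal.toReal_le_of_le_ofReal hCnn (hNle _ (hprob a))
  have : ∫ a, ∫ x, q x ∂(g a) ∂ν
      = ∫ a, (P (g a)).toReal ∂ν - ∫ a, (N (g a)).toReal ∂ν := by
    rw [← integral_sub hintP hintN]
    exact integral_congr_ae (ae_of_all _ fun a => hrepr _ (hprob a))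
  have e1 : ∫ a, (P (g a)).toReal ∂ν = (∫⁻ a, P (g a) ∂ν).toReal :=
    integral_toReal ((hPm.comp hg).aemeasurable)
      (ae_of_all _ fun a => lt_of_le_of_lt (hPle _ (hprob a)) ENNReal.ofReal_lt_top)
  have e2 : ∫ a, (N (g a)).toReal ∂ν = (∫⁻ a, N (g a) ∂ν).toReal :=
    integral_toReal ((hNm.comp hg).aemeasurable)
      (ae_of_all _ fun a => lt_of_le_of_lt (hNle _ (hprob a)) ENNReal.ofReal_lt_top)
  rw [this, e1, e2]

end aux

theorem stmt_6
    {X : Type*} [TopologicalSpace X] [PolishSpace X] [MeasurableSpace X] [BorelSpace X]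
    [MeasurableSpace (ProbabilityMeasure X)] [BorelSpace (ProbabilityMeasure X)]
    (μ : ProbabilityMeasure X) (ν : Measure (ProbabilityMeasure X)) [IsProbabilityMeasure ν]
    (hbary : ∀ g : X → ℝ, Continuous g → (∃ C : ℝ, ∀ x, |g x| ≤ C) →
      ∫ x, g x ∂(μ : Measure X) = ∫ s, (∫ x, g x ∂(s : Measure X)) ∂ν)
    (q : X → ℝ) (hqm : Measurable q) (hqb : ∃ C : ℝ, ∀ x, |q x| ≤ C) :
    ∫ x, q x ∂(μ : Measure X) = ∫ s, (∫ x, q x ∂(s : Measure X)) ∂ν := by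
  obtain ⟨C₀, hC₀⟩ := hqb
  have hC : ∀ x, |q x| ≤ max C₀ 0 := fun x => (hC₀ x).trans (le_max_left _ _)
  have hg : Measurable (fun s : ProbabilityMeasure X => (s : Measure X)) := aux_meas_coe
  -- μ equals the barycenter measure ν.bind coe
  have key : (μ : Measure X) = ν.bind (fun s => (s : Measure X)) := by
    apply ext_of_forall_lintegral_eq_of_IsFiniteMeasure
    intro f
    rw [Measure.lintegral_bind hg.aemeasurable f.continuous.measurable.coe_nnreal_ennreal.aemeasurable]
    -- convert hbary for the real-valued version of f
    set K : ℝ≥0 := nndist 0 f with hK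
    have hfb : ∀ x, |(f x : ℝ)| ≤ (K : ℝ) := fun x => by
      rw [abs_of_nonneg (f x).coe_nonneg]
      exact_mod_cast f.apply_le_nndist_zero x
    have hfcont : Continuous fun x => (f x : ℝ) := NNReal.continuous_coe.comp f.continuous
    have heq := hbary (fun x => (f x : ℝ)) hfcont ⟨(K : ℝ), hfb⟩
    have hconv : ∀ m : Measure X, IsProbabilityMeasure m →
        ∫ x, (f x : ℝ) ∂m = (∫⁻ x, (f x : ℝ≥0∞) ∂m).toReal := by
      intro m hm
      rw [integral_eq_lintegral_of_nonneg_ae (ae_of_all _ fun x => (f x).coe_nonneg)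
        hfcont.aestronglyMeasurable]
      congr 1
      exact lintegral_congr fun x => ENNReal.ofReal_coe_nnreal
    have hbdd : ∀ m : Measure X, IsProbabilityMeasure m →
        ∫⁻ x, (f x : ℝ≥0∞) ∂m ≤ (K : ℝ≥0∞) := by
      intro m hm
      calc ∫⁻ x, (f x : ℝ≥0∞) ∂m ≤ ∫⁻ _, (K : ℝ≥0∞) ∂m := by
            apply lintegral_mono
            intro x
            exact ENNReal.coe_le_coe.mpr (f.apply_le_nndist_zero x)
        _ = (K : ℝ≥0∞) := by simp [measure_univ]
    rw [hconv _ inferInstance] at heq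
    have hmeasI : Measurable fun s : ProbabilityMeasure X =>
        ∫⁻ x, (f x : ℝ≥0∞) ∂(s : Measure X) := (aux_cont_lintegral f).measurable
    have heq2 : ∫ s, (∫ x, (f x : ℝ) ∂(s : Measure X)) ∂ν
        = (∫⁻ s, ∫⁻ x, (f x : ℝ≥0∞) ∂(s : Measure X) ∂ν).toReal := by
      rw [← integral_toReal hmeasI.aemeasurable
        (ae_of_all _ fun s => lt_of_le_of_lt (hbdd _ inferInstance) ENNReal.coe_lt_top)]
      exact integral_congr_ae (ae_of_all _ fun s => hconv _ inferInstance)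
    rw [heq2] at heq
    have h1 : ∫⁻ x, (f x : ℝ≥0∞) ∂(μ : Measure X) ≠ ∞ :=
      (lt_of_le_of_lt (hbdd _ inferInstance) ENNReal.coe_lt_top).ne
    have h2 : ∫⁻ s, ∫⁻ x, (f x : ℝ≥0∞) ∂(s : Measure X) ∂ν ≠ ∞ := by
      refine (lt_of_le_of_lt ?_ (ENNReal.coe_lt_top (r := K))).ne
      calc ∫⁻ s, ∫⁻ x, (f x : ℝ≥0∞) ∂(s : Measure X) ∂ν
          ≤ ∫⁻ _, (K : ℝ≥0∞) ∂ν := lintegral_mono fun s => hbdd _ inferInstance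
        _ = (K : ℝ≥0∞) := by simp [measure_univ]
    exact (ENNReal.toReal_eq_toReal_iff' h1 h2).mp heq
  rw [key]
  exact aux_integral_bind ν _ hg (fun s => inferInstance) q hqm hC (le_max_right _ _)
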